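/- For the sequential testing problem (ST1) with n = 2: V(π) = inf_τ E_π[min(Π¹_τ,1-Π¹_τ) + min(Π²_τ,1-Π²_τ) + cτ], the restriction of the stopping region D = {V = g} to the square R₁ = [0,1/2]² has the form D ∩ R₁ = {π ∈ R₁ : π₁ ≤ A₁*, π₂ ≤ b(π₁)} for some non-increasing upper semicontinuous function b : [0,A₁*] → [0,A₂*], where (A_i*, 1-A_i*) is the continuation region of the one-dimensional testing problem ST(μ_i, c). -/
import Mathlib


open Set Filter Topology

/-- structure of the stopping region of (ST1) in the square
R₁ = [0,1/2]². V is the value function, g(π) = min(π₁,1-π₁)+min(π₂,1-π₂),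
V(·,0) and V(0,·) coincide with the one-dimensional value functions u₁, u₂, whose
continuation regions are (Aᵢ*, 1-Aᵢ*). V is assumed (as established in the paper)
continuous, ≤ g, Lipschitz(1) in each variable, and concave in each variable.
Conclusion: D ∩ R₁ = {π ∈ R₁ : π₁ ≤ A₁*, π₂ ≤ b(π₁)} for a non-increasing upper
semicontinuous b : [0,A₁*] → [0,A₂*]. -/
theorem stmt14 (A₁ A₂ : ℝ)
    (hA₁ : A₁ ∈ Set.Ioo (0:ℝ) (1/2)) (hA₂ : A₂ ∈ Set.Ioo (0:ℝ) (1/2))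
    (V g : ℝ × ℝ → ℝ)
    (hgdef : ∀ p : ℝ × ℝ, g p = min p.1 (1 - p.1) + min p.2 (1 - p.2))
    (u₁ u₂ : ℝ → ℝ)
    (hu₁ : ∀ x ∈ Set.Icc (0:ℝ) 1, V (x, 0) = u₁ x)
    (hu₂ : ∀ y ∈ Set.Icc (0:ℝ) 1, V (0, y) = u₂ y)
    (hC₁ : ∀ x ∈ Set.Icc (0:ℝ) 1, (u₁ x < min x (1 - x) ↔ x ∈ Set.Ioo A₁ (1 - A₁)))
    (hC₂ : ∀ y ∈ Set.Icc (0:ℝ) 1, (u₂ y < min y (1 - y) ↔ y ∈ Set.Ioo A₂ (1 - A₂)))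
    (hVle : ∀ p ∈ Set.Icc ((0:ℝ), (0:ℝ)) (1, 1), V p ≤ g p)
    (hVcont : ContinuousOn V (Set.Icc ((0:ℝ), (0:ℝ)) (1, 1)))
    (hLip1 : ∀ y ∈ Set.Icc (0:ℝ) 1, ∀ x ∈ Set.Icc (0:ℝ) 1, ∀ x' ∈ Set.Icc (0:ℝ) 1,
      |V (x, y) - V (x', y)| ≤ |x - x'|)
    (hLip2 : ∀ x ∈ Set.Icc (0:ℝ) 1, ∀ y ∈ Set.Icc (0:ℝ) 1, ∀ y' ∈ Set.Icc (0:ℝ) 1,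
      |V (x, y) - V (x, y')| ≤ |y - y'|)
    (hconc1 : ∀ y ∈ Set.Icc (0:ℝ) 1, ConcaveOn ℝ (Set.Icc (0:ℝ) 1) (fun x => V (x, y)))
    (hconc2 : ∀ x ∈ Set.Icc (0:ℝ) 1, ConcaveOn ℝ (Set.Icc (0:ℝ) 1) (fun y => V (x, y))) :
    ∃ b : ℝ → ℝ,
      (∀ x ∈ Set.Icc (0:ℝ) A₁, b x ∈ Set.Icc (0:ℝ) A₂) ∧
      AntitoneOn b (Set.Icc (0:ℝ) A₁) ∧
      UpperSemicontinuousOn b (Set.Icc (0:ℝ) A₁) ∧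
      (∀ p : ℝ × ℝ, p ∈ Set.Icc ((0:ℝ), (0:ℝ)) (1/2, 1/2) →
        (V p = g p ↔ p.1 ≤ A₁ ∧ p.2 ≤ b p.1)) := by

  obtain ⟨hA₁0, hA₁h⟩ := hA₁
  obtain ⟨hA₂0, hA₂h⟩ := hA₂
  -- membership in the big square Q = Icc (0,0) (1,1)
  have hQmem : ∀ x y : ℝ, x ∈ Set.Icc (0:ℝ) 1 → y ∈ Set.Icc (0:ℝ) 1 →
      ((x, y) : ℝ × ℝ) ∈ Set.Icc ((0:ℝ), (0:ℝ)) (1, 1) := by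
    intro x y hx hy
    exact ⟨⟨hx.1, hy.1⟩, ⟨hx.2, hy.2⟩⟩
  -- g on the lower-left square
  have gval : ∀ x y : ℝ, x ≤ 1/2 → y ≤ 1/2 → g (x, y) = x + y := by
    intro x y hx hy
    rw [hgdef]
    simp only
    rw [min_eq_left (by linarith), min_eq_left (by linarith)]
  -- down-closedness in the first coordinate
  have hdx : ∀ x' x y : ℝ, 0 ≤ x' → x' ≤ x → x ≤ 1/2 → 0 ≤ y → y ≤ 1/2 →
      V (x, y) = g (x, y) → V (x', y) = g (x', y) := by
    intro x' x y hx'0 hx'x hx hy0 hy hV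
    have hL := hLip1 y ⟨hy0, by linarith⟩ x ⟨by linarith, by linarith⟩ x' ⟨hx'0, by linarith⟩
    rw [abs_of_nonneg (by linarith : (0:ℝ) ≤ x - x'), abs_sub_le_iff] at hL
    have hle := hVle (x', y) (hQmem x' y ⟨hx'0, by linarith⟩ ⟨hy0, by linarith⟩)
    rw [gval x y hx hy] at hV
    rw [gval x' y (by linarith) hy] at hle ⊢
    linarith [hL.1, hL.2]
  -- down-closedness in the second coordinate
  have hdy : ∀ x y' y : ℝ, 0 ≤ x → x ≤ 1/2 → 0 ≤ y' → y' ≤ y → y ≤ 1/2 →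
      V (x, y) = g (x, y) → V (x, y') = g (x, y') := by
    intro x y' y hx0 hx hy'0 hy'y hy hV
    have hL := hLip2 x ⟨hx0, by linarith⟩ y ⟨by linarith, by linarith⟩ y' ⟨hy'0, by linarith⟩
    rw [abs_of_nonneg (by linarith : (0:ℝ) ≤ y - y'), abs_sub_le_iff] at hL
    have hle := hVle (x, y') (hQmem x y' ⟨hx0, by linarith⟩ ⟨hy'0, by linarith⟩)
    rw [gval x y hx hy] at hV
    rw [gval x y' hx (by linarith)] at hle ⊢
    linarith [hL.1, hL.2]
  -- below A₁, (x,0) is a stopping point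
  have hstop0 : ∀ x ∈ Set.Icc (0:ℝ) A₁, V (x, 0) = g (x, 0) := by
    intro x hx
    have hx1 : x ∈ Set.Icc (0:ℝ) 1 := ⟨hx.1, by linarith [hx.2]⟩
    have hmin : min x (1 - x) = x := min_eq_left (by linarith [hx.2, hx1.2])
    have hnot : ¬ u₁ x < min x (1 - x) := by
      rw [hC₁ x hx1]
      intro h
      exact absurd h.1 (not_lt.mpr hx.2)
    have hV0 := hu₁ x hx1
    have hle := hVle (x, 0) (hQmem x 0 hx1 ⟨le_refl _, by norm_num⟩)
    rw [gval x 0 (by linarith [hx.2]) (by norm_num)] at hle ⊢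
    rw [hmin] at hnot
    linarith [hV0 ▸ hle, not_lt.mp hnot, hV0]
  -- a stopping point in the small square has first coordinate ≤ A₁
  have hx_le : ∀ x y : ℝ, 0 ≤ x → x ≤ 1/2 → 0 ≤ y → y ≤ 1/2 →
      V (x, y) = g (x, y) → x ≤ A₁ := by
    intro x y hx0 hx hy0 hy hV
    by_contra hgt
    push_neg at hgt
    have hx1 : x ∈ Set.Icc (0:ℝ) 1 := ⟨hx0, by linarith⟩
    have hIoo : x ∈ Set.Ioo A₁ (1 - A₁) := ⟨hgt, by linarith⟩
    have hu := (hC₁ x hx1).mpr hIoo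
    have hmin : min x (1 - x) = x := min_eq_left (by linarith)
    have hV0 : V (x, 0) = g (x, 0) := hdy x 0 y hx0 hx (le_refl 0) hy0 hy hV
    rw [gval x 0 hx (by norm_num), hu₁ x hx1] at hV0
    rw [hmin] at hu
    linarith
  -- a stopping point in the small square has second coordinate ≤ A₂
  have hy_le : ∀ x y : ℝ, 0 ≤ x → x ≤ 1/2 → 0 ≤ y → y ≤ 1/2 →
      V (x, y) = g (x, y) → y ≤ A₂ := by
    intro x y hx0 hx hy0 hy hV
    by_contra hgt
    push_neg at hgt
    have hy1 : y ∈ Set.Icc (0:ℝ) 1 := ⟨hy0, by linarith⟩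
    have hIoo : y ∈ Set.Ioo A₂ (1 - A₂) := ⟨hgt, by linarith⟩
    have hu := (hC₂ y hy1).mpr hIoo
    have hmin : min y (1 - y) = y := min_eq_left (by linarith)
    have hV0 : V (0, y) = g (0, y) := hdx 0 x y (le_refl 0) hx0 hx hy0 hy hV
    rw [gval 0 y (by norm_num) hy, hu₂ y hy1] at hV0
    rw [hmin] at hu
    linarith
  -- the sections of the stopping set
  set S : ℝ → Set ℝ := fun x => {y | y ∈ Set.Icc (0:ℝ) (1/2) ∧ V (x, y) = g (x, y)} with hSdef
  set b : ℝ → ℝ := fun x => sSup (S x) with hbdef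
  have hbdd : ∀ x : ℝ, BddAbove (S x) := fun x => ⟨1/2, fun y hy => hy.1.2⟩
  have hzero : ∀ x ∈ Set.Icc (0:ℝ) A₁, (0:ℝ) ∈ S x := by
    intro x hx
    exact ⟨⟨le_refl _, by norm_num⟩, hstop0 x hx⟩
  have hclosed : ∀ x ∈ Set.Icc (0:ℝ) A₁, IsClosed (S x) := by
    intro x hx
    have hx1 : x ∈ Set.Icc (0:ℝ) 1 := ⟨hx.1, by linarith [hx.2]⟩
    have hcV : ContinuousOn (fun y : ℝ => V (x, y)) (Set.Icc (0:ℝ) (1/2)) := by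
      apply hVcont.comp ((continuous_const.prodMk continuous_id).continuousOn)
      intro y hy
      exact hQmem x y hx1 ⟨hy.1, by linarith [hy.2]⟩
    have hcg : ContinuousOn (fun y : ℝ => g (x, y)) (Set.Icc (0:ℝ) (1/2)) := by
      have : (fun y : ℝ => g (x, y)) = fun y : ℝ => min x (1 - x) + min y (1 - y) :=
        funext fun y => hgdef (x, y)
      rw [this]
      exact (continuous_const.add
        (continuous_id.min (continuous_const.sub continuous_id))).continuousOn
    have : S x = Set.Icc (0:ℝ) (1/2) ∩ (fun y : ℝ => V (x, y) - g (x, y)) ⁻¹' {0} := by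
      ext y
      simp only [hSdef, Set.mem_setOf_eq, Set.mem_inter_iff, Set.mem_preimage,
        Set.mem_singleton_iff, sub_eq_zero]
    rw [this]
    exact (hcV.sub hcg).preimage_isClosed_of_isClosed isClosed_Icc isClosed_singleton
  have hmem : ∀ x ∈ Set.Icc (0:ℝ) A₁, b x ∈ S x := by
    intro x hx
    exact (hclosed x hx).csSup_mem ⟨0, hzero x hx⟩ (hbdd x)
  have hbA₂ : ∀ x ∈ Set.Icc (0:ℝ) A₁, b x ≤ A₂ := by
    intro x hx
    have hm := hmem x hx
    exact hy_le x (b x) hx.1 (by linarith [hx.2]) hm.1.1 hm.1.2 hm.2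
  have hb0 : ∀ x ∈ Set.Icc (0:ℝ) A₁, 0 ≤ b x := by
    intro x hx
    exact le_csSup (hbdd x) (hzero x hx)
  refine ⟨b, fun x hx => ⟨hb0 x hx, hbA₂ x hx⟩, ?_, ?_, ?_⟩
  · -- antitone
    intro x hx x' hx' hxx'
    have hm := hmem x' hx'
    have : b x' ∈ S x := by
      refine ⟨hm.1, ?_⟩
      exact hdx x x' (b x') hx.1 hxx' (by linarith [hx'.2]) hm.1.1 hm.1.2 hm.2
    exact le_csSup (hbdd x) this
  · -- upper semicontinuity
    intro x hx z hz
    by_cases hzA : A₂ < z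
    · filter_upwards [eventually_mem_nhdsWithin] with x' hx'
      exact lt_of_le_of_lt (hbA₂ x' hx') hzA
    · push_neg at hzA
      set y' : ℝ := (b x + z) / 2 with hy'def
      have hby' : b x < y' := by simp only [hy'def]; linarith
      have hy'z : y' < z := by simp only [hy'def]; linarith
      have hy'0 : 0 ≤ y' := le_of_lt (lt_of_le_of_lt (hb0 x hx) hby')
      have hy'h : y' ≤ 1/2 := by linarith
      have hx1 : x ∈ Set.Icc (0:ℝ) 1 := ⟨hx.1, by linarith [hx.2]⟩
      -- y' is not a stopping point for x
      have hVlt : V (x, y') < g (x, y') := by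
        rcases lt_or_eq_of_le (hVle (x, y')
          (hQmem x y' hx1 ⟨hy'0, by linarith⟩)) with h | h
        · exact h
        · exfalso
          have : y' ∈ S x := ⟨⟨hy'0, hy'h⟩, h⟩
          exact absurd (le_csSup (hbdd x) this) (not_le.mpr hby')
      -- continuity argument
      have ht : Filter.Tendsto (fun x' : ℝ => ((x', y') : ℝ × ℝ))
          (nhdsWithin x (Set.Icc (0:ℝ) A₁))
          (nhdsWithin (x, y') (Set.Icc ((0:ℝ), (0:ℝ)) (1, 1))) := by
        rw [tendsto_nhdsWithin_iff]
        constructor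
        · exact ((continuous_id.prodMk continuous_const).tendsto x).mono_left
            nhdsWithin_le_nhds
        · filter_upwards [eventually_mem_nhdsWithin] with x' hx'
          exact hQmem x' y' ⟨hx'.1, by linarith [hx'.2]⟩ ⟨hy'0, by linarith⟩
      have hVt : Filter.Tendsto (fun x' : ℝ => V (x', y'))
          (nhdsWithin x (Set.Icc (0:ℝ) A₁)) (nhds (V (x, y'))) :=
        Filter.Tendsto.comp (hVcont (x, y') (hQmem x y' hx1 ⟨hy'0, by linarith⟩)) ht
      have hgfun : (fun x' : ℝ => g (x', y')) =
          fun x' : ℝ => min x' (1 - x') + min y' (1 - y') := funext fun x' => hgdef (x', y')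
      have hgt : Filter.Tendsto (fun x' : ℝ => g (x', y'))
          (nhdsWithin x (Set.Icc (0:ℝ) A₁)) (nhds (g (x, y'))) := by
        rw [hgfun, hgdef (x, y')]
        exact (((continuous_id.min (continuous_const.sub continuous_id)).add
          continuous_const).tendsto x).mono_left nhdsWithin_le_nhds
      have hev : ∀ᶠ x' in nhdsWithin x (Set.Icc (0:ℝ) A₁),
          V (x', y') - g (x', y') < 0 :=
        (hVt.sub hgt).eventually_lt_const (by linarith)
      filter_upwards [hev, eventually_mem_nhdsWithin] with x' hx'lt hx'mem
      -- conclude b x' < z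
      by_contra hge
      push_neg at hge
      have hy'le : y' ≤ b x' := by linarith
      have hm := hmem x' hx'mem
      have : V (x', y') = g (x', y') :=
        hdy x' y' (b x') hx'mem.1 (by linarith [hx'mem.2]) hy'0 hy'le hm.1.2 hm.2
      linarith
  · -- characterization
    intro p hp
    have hp1 : 0 ≤ p.1 := hp.1.1
    have hp2 : 0 ≤ p.2 := hp.1.2
    have hp1h : p.1 ≤ 1/2 := hp.2.1
    have hp2h : p.2 ≤ 1/2 := hp.2.2
    constructor
    · intro hV
      have hVp : V (p.1, p.2) = g (p.1, p.2) := by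
        rw [show ((p.1, p.2) : ℝ × ℝ) = p from Prod.mk.eta]; exact hV
      have h1 : p.1 ≤ A₁ := hx_le p.1 p.2 hp1 hp1h hp2 hp2h hVp
      refine ⟨h1, ?_⟩
      exact le_csSup (hbdd p.1) ⟨⟨hp2, hp2h⟩, hVp⟩
    · rintro ⟨h1, h2⟩
      have hxA : p.1 ∈ Set.Icc (0:ℝ) A₁ := ⟨hp1, h1⟩
      have hm := hmem p.1 hxA
      have : V (p.1, p.2) = g (p.1, p.2) :=
        hdy p.1 p.2 (b p.1) hp1 hp1h hp2 h2 hm.1.2 hm.2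
      rw [show ((p.1, p.2) : ℝ × ℝ) = p from Prod.mk.eta] at this
      exact this
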